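/- Let M be an n × n random matrix whose rows are independent and uniformly sub-Gaussian with respect to the Euclidean norm, i.e., there exist B, b > 0 with P(‖Rᵢ‖₂ ≥ t) ≤ B·exp(−b·t²) for all i and t > 0. Then there exist constants C, c > 0 such that P(‖M‖_op > A√n) ≤ C·exp(−c·A·n) for all A ≥ C. -/

import Mathlib

open MeasureTheory Real Set
open scoped ENNReal

section Aux
variable {Ω : Type*} [MeasurableSpace Ω] {μ : Measure Ω}

lemma aux_lintegral_prod [IsProbabilityMeasure μ] {ι : Type*} (f : ι → Ω → ℝ≥0∞)
    (h : ProbabilityTheory.iIndepFun f μ)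
    (hm : ∀ i, Measurable (f i)) (s : Finset ι) :
    ∫⁻ ω, ∏ i ∈ s, f i ω ∂μ = ∏ i ∈ s, ∫⁻ ω, f i ω ∂μ := by
  classical
  induction s using Finset.cons_induction with
  | empty => simp
  | cons i s hi ih =>
    simp only [Finset.prod_cons]
    have hg : Measurable (fun ω => ∏ j ∈ s, f j ω) :=
      Finset.measurable_prod s (fun j _ => hm j)
    have hindep : ProbabilityTheory.IndepFun (f i) (fun ω => ∏ j ∈ s, f j ω) μ := by
      have := (h.indepFun_finsetProd_of_notMem hm hi).symm
      convert this using 1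
      ext ω
      simp [Finset.prod_apply]
    have key := ProbabilityTheory.lintegral_mul_eq_lintegral_mul_lintegral_of_indepFun
      (hm i) hg hindep
    simp only [Pi.mul_apply] at key
    rw [key, ih]

lemma aux_mgf_bound [IsProbabilityMeasure μ] (B b : ℝ) (hB : 0 < B) (hb : 0 < b)
    (X : Ω → ℝ) (hX : Measurable X) (hX0 : ∀ ω, 0 ≤ X ω)
    (htail : ∀ t > 0, μ {ω | t ≤ X ω} ≤ ENNReal.ofReal (B * Real.exp (-b * t ^ 2))) :
    ∫⁻ ω, ENNReal.ofReal (Real.exp (b / 2 * X ω ^ 2)) ∂μ ≤ ENNReal.ofReal (1 + B) := by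
  have hmble : AEMeasurable (fun ω => Real.exp (b / 2 * X ω ^ 2)) μ :=
    ((hX.pow_const 2).const_mul _).exp.aemeasurable
  rw [lintegral_eq_lintegral_meas_le μ (ae_of_all μ fun ω => (Real.exp_pos _).le) hmble]
  have hsplit : Ioi (0 : ℝ) = Ioc (0 : ℝ) 1 ∪ Ioi 1 := (Ioc_union_Ioi_eq_Ioi zero_le_one).symm
  rw [hsplit, lintegral_union measurableSet_Ioi (Ioc_disjoint_Ioi le_rfl)]
  have h1 : ∫⁻ t in Ioc (0:ℝ) 1, μ {a | t ≤ Real.exp (b / 2 * X a ^ 2)} ≤ 1 := by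
    calc ∫⁻ t in Ioc (0:ℝ) 1, μ {a | t ≤ Real.exp (b / 2 * X a ^ 2)}
        ≤ ∫⁻ _ in Ioc (0:ℝ) 1, 1 := setLIntegral_mono measurable_const fun t _ => prob_le_one
      _ = 1 := by simp
  have h2 : ∫⁻ t in Ioi (1:ℝ), μ {a | t ≤ Real.exp (b / 2 * X a ^ 2)} ≤ ENNReal.ofReal B := by
    have hle : ∀ t ∈ Ioi (1:ℝ), μ {a | t ≤ Real.exp (b / 2 * X a ^ 2)} ≤
        ENNReal.ofReal (B * t ^ (-2 : ℝ)) := by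
      intro t ht
      have ht1 : (1:ℝ) < t := ht
      have hlogt : 0 < Real.log t := Real.log_pos ht1
      set s := Real.sqrt (2 * Real.log t / b) with hs
      have hspos : 0 < s := Real.sqrt_pos.2 (by positivity)
      have hsub : {a | t ≤ Real.exp (b / 2 * X a ^ 2)} ⊆ {a | s ≤ X a} := by
        intro a ha
        simp only [Set.mem_setOf_eq] at ha ⊢
        have hlog : Real.log t ≤ b / 2 * X a ^ 2 :=
          (Real.log_le_iff_le_exp (lt_trans one_pos ht1)).2 ha
        have hsq : 2 * Real.log t / b ≤ X a ^ 2 := by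
          rw [div_le_iff₀ hb]
          nlinarith [hlog]
        calc s ≤ Real.sqrt (X a ^ 2) := Real.sqrt_le_sqrt hsq
          _ = X a := Real.sqrt_sq (hX0 a)
      have hs2 : s ^ 2 = 2 * Real.log t / b := Real.sq_sqrt (by positivity)
      calc μ {a | t ≤ Real.exp (b / 2 * X a ^ 2)} ≤ μ {a | s ≤ X a} := measure_mono hsub
        _ ≤ ENNReal.ofReal (B * Real.exp (-b * s ^ 2)) := htail s hspos
        _ = ENNReal.ofReal (B * t ^ (-2 : ℝ)) := by
            congr 1
            rw [hs2]
            congr 1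
            rw [Real.rpow_def_of_pos (lt_trans one_pos ht1)]
            congr 1
            field_simp
    calc ∫⁻ t in Ioi (1:ℝ), μ {a | t ≤ Real.exp (b / 2 * X a ^ 2)}
        ≤ ∫⁻ t in Ioi (1:ℝ), ENNReal.ofReal (B * t ^ (-2 : ℝ)) :=
          setLIntegral_mono (by measurability) hle
      _ = ENNReal.ofReal (∫ t in Ioi (1:ℝ), B * t ^ (-2 : ℝ)) := by
          rw [← ofReal_integral_eq_lintegral_ofReal]
          · exact (integrableOn_Ioi_rpow_of_lt (by norm_num) one_pos).const_mul B
          · filter_upwards [ae_restrict_mem measurableSet_Ioi] with t ht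
            have : (0:ℝ) < t := lt_trans one_pos ht
            positivity
      _ = ENNReal.ofReal B := by
          rw [integral_const_mul, integral_Ioi_rpow_of_lt (by norm_num) one_pos]
          norm_num
  calc _ ≤ 1 + ENNReal.ofReal B := add_le_add h1 h2
    _ = ENNReal.ofReal (1 + B) := by
        rw [ENNReal.ofReal_add zero_le_one hB.le, ENNReal.ofReal_one]

end Aux

lemma aux_opNorm_le (n : ℕ) (M : Matrix (Fin n) (Fin n) ℝ) :
    ‖Matrix.toEuclideanCLM (𝕜 := ℝ) M‖ ≤ Real.sqrt (∑ i, ∑ j, M i j ^ 2) := by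
  apply ContinuousLinearMap.opNorm_le_bound _ (Real.sqrt_nonneg _)
  intro x
  have hx : ‖x‖ ^ 2 = ∑ j, x j ^ 2 := by
    rw [EuclideanSpace.norm_eq, Real.sq_sqrt (by positivity)]
    simp [sq_abs]
  have happ : ∀ i, (Matrix.toEuclideanCLM (𝕜 := ℝ) M x) i = ∑ j, M i j * x j := by
    intro i
    have := Matrix.ofLp_toEuclideanCLM (𝕜 := ℝ) M x
    have h2 := congrFun this i
    simpa [Matrix.mulVec, dotProduct] using h2
  have hnorm : ‖Matrix.toEuclideanCLM (𝕜 := ℝ) M x‖ ^ 2 = ∑ i, (∑ j, M i j * x j) ^ 2 := by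
    rw [EuclideanSpace.norm_eq, Real.sq_sqrt (by positivity)]
    simp [sq_abs, happ]
  have key : ‖Matrix.toEuclideanCLM (𝕜 := ℝ) M x‖ ^ 2 ≤ (∑ i, ∑ j, M i j ^ 2) * ‖x‖ ^ 2 := by
    rw [hnorm, hx, Finset.sum_mul]
    apply Finset.sum_le_sum
    intro i _
    exact Finset.sum_mul_sq_le_sq_mul_sq Finset.univ (fun j => M i j) (fun j => x j)
  calc ‖Matrix.toEuclideanCLM (𝕜 := ℝ) M x‖
      = Real.sqrt (‖Matrix.toEuclideanCLM (𝕜 := ℝ) M x‖ ^ 2) :=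
        (Real.sqrt_sq (norm_nonneg _)).symm
    _ ≤ Real.sqrt ((∑ i, ∑ j, M i j ^ 2) * ‖x‖ ^ 2) := Real.sqrt_le_sqrt key
    _ = Real.sqrt (∑ i, ∑ j, M i j ^ 2) * ‖x‖ := by
        rw [Real.sqrt_mul (by positivity), Real.sqrt_sq (norm_nonneg _)]

theorem opNorm_bound_indep_subGaussian_rows {Ω : Type*} [MeasurableSpace Ω]
    (μ : Measure Ω) [IsProbabilityMeasure μ]
    (B b : ℝ) (hB : 0 < B) (hb : 0 < b) :
    ∃ C c : ℝ, 0 < C ∧ 0 < c ∧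
      ∀ (n : ℕ) (M : Ω → Matrix (Fin n) (Fin n) ℝ),
        (∀ i j, Measurable fun ω => M ω i j) →
        ProbabilityTheory.iIndepFun
          (fun i : Fin n => fun ω => M ω i) μ →
        (∀ i, ∀ t > 0,
          μ {ω | t ≤ Real.sqrt (∑ j, (M ω i j) ^ 2)} ≤
            ENNReal.ofReal (B * Real.exp (-b * t ^ 2))) →
        ∀ A ≥ C,
          μ {ω | A * Real.sqrt n < ‖Matrix.toEuclideanCLM (𝕜 := ℝ) (M ω)‖} ≤
            ENNReal.ofReal (C * Real.exp (-c * A * n)) := by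
  have hL : 0 < Real.log (1 + B) := Real.log_pos (by linarith)
  set L := Real.log (1 + B) with hLdef
  refine ⟨2 + 2 * L / b, b / 2, by positivity, by positivity, ?_⟩
  intro n M hM hindep htail A hA
  set C : ℝ := 2 + 2 * L / b with hCdef
  have hC1 : (1:ℝ) ≤ C := by
    have : 0 ≤ 2 * L / b := by positivity
    simp only [hCdef]; linarith
  have hA1 : (1:ℝ) ≤ A := le_trans hC1 hA
  have hApos : (0:ℝ) < A := lt_of_lt_of_le one_pos hA1
  -- the functions
  set g : Fin n → Ω → ℝ≥0∞ :=
    fun i ω => ENNReal.ofReal (Real.exp (b / 2 * ∑ j, M ω i j ^ 2)) with hgdef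
  have hrowsum : Measurable (fun v : Fin n → ℝ => ∑ j, v j ^ 2) :=
    Finset.measurable_sum Finset.univ fun j _ => (measurable_pi_apply j).pow_const 2
  have hgm : ∀ i, Measurable (g i) := by
    intro i
    exact ((Finset.measurable_sum Finset.univ fun j _ =>
      (hM i j).pow_const 2).const_mul (b / 2)).exp.ennreal_ofReal
  have hgind : ProbabilityTheory.iIndepFun g μ := by
    have := hindep.comp
      (fun i (v : Fin n → ℝ) => ENNReal.ofReal (Real.exp (b / 2 * ∑ j, v j ^ 2)))
      (fun i => ((hrowsum.const_mul (b / 2)).exp).ennreal_ofReal)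
    exact this
  have hgint : ∀ i, ∫⁻ ω, g i ω ∂μ ≤ ENNReal.ofReal (1 + B) := by
    intro i
    have hXm : Measurable (fun ω => Real.sqrt (∑ j, M ω i j ^ 2)) :=
      (Finset.measurable_sum Finset.univ fun j _ => (hM i j).pow_const 2).sqrt
    have hmgf := aux_mgf_bound B b hB hb _ hXm (fun ω => Real.sqrt_nonneg _) (htail i)
    have hxx : ∀ ω : Ω, Real.sqrt (∑ j, M ω i j ^ 2) ^ 2 = ∑ j, M ω i j ^ 2 :=
      fun ω => Real.sq_sqrt (by positivity)
    simp only [hxx] at hmgf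
    exact hmgf
  -- Chernoff
  set ε : ℝ≥0∞ := ENNReal.ofReal (Real.exp (b / 2 * (A ^ 2 * n))) with hεdef
  have hsub : {ω | A * Real.sqrt n < ‖Matrix.toEuclideanCLM (𝕜 := ℝ) (M ω)‖} ⊆
      {ω | ε ≤ ∏ i, g i ω} := by
    intro ω hω
    simp only [Set.mem_setOf_eq] at hω ⊢
    have hS : A * Real.sqrt n < Real.sqrt (∑ i, ∑ j, M ω i j ^ 2) :=
      lt_of_lt_of_le hω (aux_opNorm_le n (M ω))
    have hsq : A ^ 2 * n ≤ ∑ i, ∑ j, M ω i j ^ 2 := by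
      have h0 : (0:ℝ) ≤ A * Real.sqrt n := by positivity
      have := pow_lt_pow_left₀ hS h0 (two_ne_zero)
      rw [mul_pow, Real.sq_sqrt (Nat.cast_nonneg n),
        Real.sq_sqrt (by positivity)] at this
      exact this.le
    calc ε ≤ ENNReal.ofReal (Real.exp (b / 2 * ∑ i, ∑ j, M ω i j ^ 2)) := by
          apply ENNReal.ofReal_le_ofReal
          exact Real.exp_le_exp.2 (mul_le_mul_of_nonneg_left hsq (by positivity))
      _ = ∏ i, g i ω := by
          rw [Finset.mul_sum, Real.exp_sum, ENNReal.ofReal_prod_of_nonneg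
            (fun i _ => (Real.exp_pos _).le)]
  have hf : Measurable (fun ω => ∏ i, g i ω) :=
    Finset.measurable_prod Finset.univ fun i _ => hgm i
  have markov := mul_meas_ge_le_lintegral (μ := μ) hf ε
  have hprod := aux_lintegral_prod g hgind hgm Finset.univ
  have hbound : ∫⁻ ω, ∏ i, g i ω ∂μ ≤ ENNReal.ofReal ((1 + B) ^ n) := by
    rw [hprod]
    calc ∏ i, ∫⁻ ω, g i ω ∂μ ≤ ∏ _i : Fin n, ENNReal.ofReal (1 + B) :=
          Finset.prod_le_prod' fun i _ => hgint i
      _ = ENNReal.ofReal ((1 + B) ^ n) := by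
          rw [Finset.prod_const, Finset.card_univ, Fintype.card_fin,
            ENNReal.ofReal_pow (by linarith)]
  have hreal : (1 + B) ^ n ≤
      Real.exp (b / 2 * (A ^ 2 * n)) * (C * Real.exp (-(b / 2) * A * n)) := by
    have hAL : 2 + 2 * L / b ≤ A := hA
    have h1 : L ≤ b / 2 * A * (A - 1) := by
      have h2 : 2 * L / b ≤ A := by linarith [(by positivity : (0:ℝ) < 2 * L / b)]
      have h3 : 1 ≤ A - 1 := by linarith [(by positivity : (0:ℝ) ≤ 2 * L / b)]
      have h4 : 2 * L ≤ b * A := by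
        rw [div_le_iff₀ hb] at h2; linarith
      nlinarith [hb.le, hApos.le]
    have hexp : (1 + B) ^ n = Real.exp ((n : ℝ) * L) := by
      rw [← Real.exp_log (show (0:ℝ) < 1 + B by linarith), ← Real.exp_nat_mul]
    rw [hexp]
    calc Real.exp ((n : ℝ) * L)
        ≤ Real.exp (b / 2 * (A ^ 2 * n) + -(b / 2) * A * n) := by
          apply Real.exp_le_exp.2
          have := mul_le_mul_of_nonneg_left h1 (Nat.cast_nonneg n : (0:ℝ) ≤ n)
          nlinarith [this]
      _ = Real.exp (b / 2 * (A ^ 2 * n)) * Real.exp (-(b / 2) * A * n) := Real.exp_add _ _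
      _ ≤ Real.exp (b / 2 * (A ^ 2 * n)) * (C * Real.exp (-(b / 2) * A * n)) := by
          apply mul_le_mul_of_nonneg_left _ (Real.exp_pos _).le
          exact le_mul_of_one_le_left (Real.exp_pos _).le hC1
  have hεne : ε ≠ 0 := (ENNReal.ofReal_pos.2 (Real.exp_pos _)).ne'
  have hεtop : ε ≠ ⊤ := ENNReal.ofReal_ne_top
  have main : ε * μ {ω | A * Real.sqrt n < ‖Matrix.toEuclideanCLM (𝕜 := ℝ) (M ω)‖} ≤
      ε * ENNReal.ofReal (C * Real.exp (-(b / 2) * A * n)) := by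
    calc ε * μ {ω | A * Real.sqrt n < ‖Matrix.toEuclideanCLM (𝕜 := ℝ) (M ω)‖}
        ≤ ε * μ {ω | ε ≤ ∏ i, g i ω} := mul_le_mul_right (measure_mono hsub) ε
      _ ≤ ∫⁻ ω, ∏ i, g i ω ∂μ := markov
      _ ≤ ENNReal.ofReal ((1 + B) ^ n) := hbound
      _ ≤ ε * ENNReal.ofReal (C * Real.exp (-(b / 2) * A * n)) := by
          rw [hεdef, ← ENNReal.ofReal_mul (Real.exp_pos _).le]
          exact ENNReal.ofReal_le_ofReal hreal
  exact (ENNReal.mul_le_mul_iff_right hεne hεtop).mp main
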